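/- Let $X$ be a finite set and $m$ a symmetric labelling assigning to each pair of distinct $x,y \in X$ an integer $m(x,y) \geq 2$ (all labels finite) with $m(x,y) \neq 3$ for all pairs. If the associated Coxeter group $W_\Gamma$ is infinite, then there exist pairwise distinct $a, b, c \in X$ such that at most one of $m(a,b)$, $m(b,c)$, $m(a,c)$ equals $2$. -/
import Mathlib

/-- A group generated by two involutions whose product has finite order is finite. -/
lemma finite_closure_pair {G : Type*} [Group G] {a b : G} (ha : a * a = 1) (hb : b * b = 1)
    {m : ℕ} (hm : m ≠ 0) (hab : (a * b) ^ m = 1) :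
    ((Subgroup.closure {a, b} : Subgroup G) : Set G).Finite := by
  have hai : a⁻¹ = a := inv_eq_of_mul_eq_one_left ha
  have hbi : b⁻¹ = b := inv_eq_of_mul_eq_one_left hb
  have haa : ∀ x : G, a * (a * x) = x := fun x => by rw [← mul_assoc, ha, one_mul]
  set N : Subgroup G := Subgroup.zpowers (a * b) with hN
  have hfinN : ((N : Set G)).Finite := by
    have : IsOfFinOrder (a * b) := isOfFinOrder_iff_pow_eq_one.mpr ⟨m, Nat.pos_of_ne_zero hm, hab⟩
    exact this.finite_zpowers
  have hconj : ∀ n ∈ N, a * n * a ∈ N := by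
    rintro n hn
    obtain ⟨k, rfl⟩ := Subgroup.mem_zpowers_iff.mp hn
    refine Subgroup.mem_zpowers_iff.mpr ⟨-k, ?_⟩
    rw [zpow_neg]
    have key : a * (a * b) * a⁻¹ = (a * b)⁻¹ := by
      rw [mul_inv_rev, hai, hbi, ← mul_assoc, ha, one_mul]
    calc ((a * b) ^ k)⁻¹ = ((a * b)⁻¹) ^ k := by rw [inv_zpow]
      _ = (a * (a * b) * a⁻¹) ^ k := by rw [key]
      _ = a * (a * b) ^ k * a⁻¹ := conj_zpow
      _ = a * (a * b) ^ k * a := by rw [hai]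
  have hmem : ∀ g ∈ Subgroup.closure ({a, b} : Set G), g ∈ N ∨ a * g ∈ N := by
    intro g hg
    induction hg using Subgroup.closure_induction with
    | mem x hx =>
      rcases hx with rfl | hx
      · exact Or.inr (by rw [ha]; exact N.one_mem)
      · rcases hx with rfl
        exact Or.inr (Subgroup.mem_zpowers _)
    | one => exact Or.inl N.one_mem
    | mul g h _ _ ihg ihh =>
      rcases ihg with hg' | hg' <;> rcases ihh with hh' | hh'
      · exact Or.inl (N.mul_mem hg' hh')
      · refine Or.inr ?_
        have e : a * (g * h) = (a * g * a) * (a * h) := by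
          simp only [mul_assoc, haa]
        rw [e]; exact N.mul_mem (hconj _ hg') hh'
      · refine Or.inr ?_
        have e : a * (g * h) = (a * g) * h := by rw [mul_assoc]
        rw [e]; exact N.mul_mem hg' hh'
      · refine Or.inl ?_
        have e : g * h = (a * (a * g) * a) * (a * h) := by
          simp only [mul_assoc, haa]
        rw [e]; exact N.mul_mem (hconj _ hg') hh'
    | inv g _ ih =>
      rcases ih with hg' | hg'
      · exact Or.inl (N.inv_mem hg')
      · refine Or.inr ?_
        have e : a * g⁻¹ = a * (a * g)⁻¹ * a := by
          rw [mul_inv_rev, hai]; simp [mul_assoc, ha]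
        rw [e]; exact hconj _ (N.inv_mem hg')
  have hsub : ((Subgroup.closure {a, b} : Subgroup G) : Set G) ⊆
      (N : Set G) ∪ (fun n => a * n) '' (N : Set G) := by
    intro g hg
    rcases hmem g hg with h | h
    · exact Or.inl h
    · exact Or.inr ⟨a * g, h, haa g⟩
  exact (hfinN.union (hfinN.image _)).subset hsub

lemma commute_of_sq {G : Type*} [Group G] {a b : G} (ha : a * a = 1) (hb : b * b = 1)
    (h2 : (a * b) ^ 2 = 1) : Commute a b := by
  have hai : a⁻¹ = a := inv_eq_of_mul_eq_one_left ha
  have hbi : b⁻¹ = b := inv_eq_of_mul_eq_one_left hb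
  have h : (a * b) * (a * b) = 1 := by rw [← pow_two]; exact h2
  have := eq_inv_of_mul_eq_one_left h
  rw [mul_inv_rev, hai, hbi] at this
  exact this

lemma commute_closure_closure {G : Type*} [Group G] {S T : Set G}
    (h : ∀ x ∈ S, ∀ y ∈ T, Commute x y) :
    ∀ g ∈ Subgroup.closure S, ∀ k ∈ Subgroup.closure T, Commute g k := by
  intro g hg
  induction hg using Subgroup.closure_induction with
  | mem x hx =>
    intro k hk
    induction hk using Subgroup.closure_induction with
    | mem y hy => exact h x hx y hy
    | one => exact Commute.one_right x
    | mul u v _ _ ih1 ih2 => exact ih1.mul_right ih2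
    | inv u _ ih => exact ih.inv_right
  | one => exact fun k _ => Commute.one_left k
  | mul u v _ _ ih1 ih2 => exact fun k hk => (ih1 k hk).mul_left (ih2 k hk)
  | inv u _ ih => exact fun k hk => (ih k hk).inv_left

/-- Let `X` be a finite set and `cm` a Coxeter matrix on `X` all of whose
off-diagonal entries are finite (at least `2`, the Mathlib convention `0 = ∞` being excluded)
and none equal to `3` (the 3-free condition). If the associated Coxeter group is infinite,
then there exist pairwise distinct `a, b, c ∈ X` such that at most one of the labels
`cm a b`, `cm b c`, `cm a c` equals `2`. -/
theorem three_free_infinite_coxeter_has_triangle {X : Type*} [Fintype X]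
    (cm : CoxeterMatrix X)
    (hge2 : ∀ x y : X, x ≠ y → 2 ≤ cm x y)
    (h3free : ∀ x y : X, x ≠ y → cm x y ≠ 3)
    (hinf : Infinite cm.Group) :
    ∃ a b c : X, a ≠ b ∧ b ≠ c ∧ a ≠ c ∧
      ¬(cm a b = 2 ∧ cm b c = 2) ∧ ¬(cm a b = 2 ∧ cm a c = 2) ∧
      ¬(cm b c = 2 ∧ cm a c = 2) := by
  classical
  by_contra hcon
  push_neg at hcon
  -- the non-commuting graph is a matching
  have hmatch : ∀ x y z : X, x ≠ y → cm x y ≠ 2 → x ≠ z → cm x z ≠ 2 → y = z := by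
    intro x y z hxy h2xy hxz h2xz
    by_contra hyz
    have h1 := hcon y x z (Ne.symm hxy) hxz hyz
      (fun h => absurd ((cm.symmetric x y).trans h) h2xy)
      (fun h => absurd ((cm.symmetric x y).trans h) h2xy)
    exact h2xz h1.1
  -- basic facts about simple reflections
  have hs2 : ∀ x : X, cm.simple x * cm.simple x = 1 :=
    fun x => cm.toCoxeterSystem.simple_mul_simple_self x
  have hpow : ∀ x y : X, (cm.simple x * cm.simple y) ^ cm x y = 1 :=
    fun x y => cm.toCoxeterSystem.simple_mul_simple_pow x y
  have hcommute : ∀ u v : X, cm u v = 2 → Commute (cm.simple u) (cm.simple v) := by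
    intro u v h2
    exact commute_of_sq (hs2 u) (hs2 v) (by rw [← h2]; exact hpow u v)
  -- ranking
  set r : X → ℕ := fun x => ((Fintype.equivFin X) x : ℕ) with hrdef
  have hrinj : Function.Injective r := fun x y h =>
    (Fintype.equivFin X).injective (Fin.val_injective h)
  -- the family of block subgroups
  set H : X → Subgroup cm.Group := fun x =>
    if ∃ y, (x ≠ y ∧ cm x y ≠ 2) ∧ r y < r x then ⊥
    else Subgroup.closure (cm.simple '' {z | z = x ∨ (x ≠ z ∧ cm x z ≠ 2)}) with hHdef
  -- any two distinct surviving vertices have commuting blocks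
  have hxy2 : ∀ x y : X, x ≠ y →
      ¬(∃ w, (x ≠ w ∧ cm x w ≠ 2) ∧ r w < r x) →
      ¬(∃ w, (y ≠ w ∧ cm y w ≠ 2) ∧ r w < r y) → cm x y = 2 := by
    intro x y hxy hx hy
    by_contra h2
    have h1 : ¬ r y < r x := fun hlt => hx ⟨y, ⟨hxy, h2⟩, hlt⟩
    have h2' : ¬ r x < r y := fun hlt =>
      hy ⟨x, ⟨Ne.symm hxy, fun h => h2 ((cm.symmetric x y).trans h)⟩, hlt⟩
    exact hxy (hrinj (le_antisymm (not_lt.mp h1) (not_lt.mp h2')))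
  have hcross : ∀ x y : X, x ≠ y →
      ¬(∃ w, (x ≠ w ∧ cm x w ≠ 2) ∧ r w < r x) →
      ¬(∃ w, (y ≠ w ∧ cm y w ≠ 2) ∧ r w < r y) →
      ∀ u, (u = x ∨ (x ≠ u ∧ cm x u ≠ 2)) → ∀ v, (v = y ∨ (y ≠ v ∧ cm y v ≠ 2)) →
      cm u v = 2 := by
    intro x y hxy hx hy u hu v hv
    rcases hu with rfl | hu <;> rcases hv with rfl | hv
    · exact hxy2 u v hxy hx hy
    · -- u = x, v adjacent to y
      have hxv : u ≠ v := by
        rintro rfl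
        exact hv.2 ((cm.symmetric y u).trans (hxy2 u y hxy hx hy))
      by_contra h2
      have := hmatch v u y (Ne.symm hxv) (fun h => h2 ((cm.symmetric u v).trans h))
        (Ne.symm hv.1) (fun h => hv.2 ((cm.symmetric y v).trans h))
      exact hxy this
    · -- u adjacent to x, v = y
      have huv : u ≠ v := by
        rintro rfl
        exact hu.2 (hxy2 x u hxy hx hy)
      by_contra h2
      exact hxy (hmatch u x v (Ne.symm hu.1)
        (fun h => hu.2 ((cm.symmetric x u).trans h)) huv h2)
    · -- both adjacent
      have huv : u ≠ v := by
        rintro rfl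
        exact hxy (hmatch u x y (Ne.symm hu.1)
          (fun h => hu.2 ((cm.symmetric x u).trans h))
          (Ne.symm hv.1) (fun h => hv.2 ((cm.symmetric y u).trans h)))
      by_contra h2
      have hxv : x = v := hmatch u x v (Ne.symm hu.1)
        (fun h => hu.2 ((cm.symmetric x u).trans h)) huv h2
      subst hxv
      exact hv.2 ((cm.symmetric y x).trans (hxy2 x y hxy hx hy))
  have hcomm : Pairwise fun i j : X => ∀ g k : cm.Group, g ∈ H i → k ∈ H j → Commute g k := by
    intro i j hij g k hg hk
    simp only [hHdef] at hg hk
    by_cases hi : ∃ y, (i ≠ y ∧ cm i y ≠ 2) ∧ r y < r i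
    · rw [if_pos hi, Subgroup.mem_bot] at hg; rw [hg]; exact Commute.one_left k
    by_cases hj : ∃ y, (j ≠ y ∧ cm j y ≠ 2) ∧ r y < r j
    · rw [if_pos hj, Subgroup.mem_bot] at hk; rw [hk]; exact Commute.one_right g
    rw [if_neg hi] at hg
    rw [if_neg hj] at hk
    refine commute_closure_closure ?_ g hg k hk
    rintro _ ⟨u, hu, rfl⟩ _ ⟨v, hv, rfl⟩
    exact hcommute u v (hcross i j hij hi hj u hu v hv)
  -- the blocks generate everything
  have htop : ⨆ i, H i = ⊤ := by
    rw [← cm.toCoxeterSystem.subgroup_closure_range_simple]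
    refine le_antisymm (by rw [cm.toCoxeterSystem.subgroup_closure_range_simple]; exact le_top)
      ((Subgroup.closure_le _).mpr ?_)
    rintro _ ⟨z, rfl⟩
    by_cases hz : ∃ y, (z ≠ y ∧ cm z y ≠ 2) ∧ r y < r z
    · obtain ⟨y, hadj, hlt⟩ := hz
      have hy : ¬(∃ w, (y ≠ w ∧ cm y w ≠ 2) ∧ r w < r y) := by
        rintro ⟨w, hw, hlt'⟩
        have : w = z := hmatch y w z hw.1 hw.2 (Ne.symm hadj.1)
          (fun h => hadj.2 ((cm.symmetric z y).trans h))
        subst this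
        exact absurd hlt (not_lt.mpr hlt'.le)
      have : cm.toCoxeterSystem.simple z ∈ H y := by
        simp only [hHdef]
        rw [if_neg hy]
        exact Subgroup.subset_closure ⟨z, Or.inr ⟨Ne.symm hadj.1,
          fun h => hadj.2 ((cm.symmetric z y).trans h)⟩, rfl⟩
      exact SetLike.le_def.mp (le_iSup H y) this
    · have : cm.toCoxeterSystem.simple z ∈ H z := by
        simp only [hHdef]
        rw [if_neg hz]
        exact Subgroup.subset_closure ⟨z, Or.inl rfl, rfl⟩
      exact SetLike.le_def.mp (le_iSup H z) this
  -- each block is finite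
  have hfin : ∀ i : X, Finite (H i) := by
    intro i
    simp only [hHdef]
    by_cases hi : ∃ y, (i ≠ y ∧ cm i y ≠ 2) ∧ r y < r i
    · rw [if_pos hi]; infer_instance
    rw [if_neg hi]
    by_cases hp : ∃ y, i ≠ y ∧ cm i y ≠ 2
    · obtain ⟨y, hy⟩ := hp
      have hset : {z | z = i ∨ (i ≠ z ∧ cm i z ≠ 2)} = ({i, y} : Set X) := by
        ext z
        constructor
        · rintro (rfl | hz)
          · exact Or.inl rfl
          · exact Or.inr (hmatch i y z hy.1 hy.2 hz.1 hz.2).symm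
        · rintro (rfl | rfl)
          · exact Or.inl rfl
          · exact Or.inr hy
      rw [hset, Set.image_pair]
      have hm0 : cm i y ≠ 0 := by
        intro h; have := hge2 i y hy.1; omega
      exact (finite_closure_pair (hs2 i) (hs2 y) hm0 (hpow i y)).to_subtype
    · have hset : {z | z = i ∨ (i ≠ z ∧ cm i z ≠ 2)} = ({i} : Set X) := by
        ext z
        constructor
        · rintro (rfl | hz)
          · rfl
          · exact absurd ⟨hz.1, hz.2⟩ (fun h => hp ⟨z, h⟩)
        · rintro rfl; exact Or.inl rfl
      rw [hset, Set.image_singleton, ← Set.pair_eq_singleton]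
      have h1 : (cm.simple i * cm.simple i) ^ 1 = 1 := by rw [pow_one]; exact hs2 i
      exact (finite_closure_pair (hs2 i) (hs2 i) one_ne_zero h1).to_subtype
  -- conclude finiteness
  haveI := hfin
  have hsurj : Function.Surjective (Subgroup.noncommPiCoprod hcomm) := by
    rw [← MonoidHom.range_eq_top, Subgroup.noncommPiCoprod_range, htop]
  have : Finite cm.Group := Finite.of_surjective _ hsurj
  exact not_finite cm.Group
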